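/- Suppose a ∈ C²(ℝ) satisfies a' > 0 and a'' > 0 on ℝ, F ∈ C³(ℝ) satisfies F' = a, and a(0) = F(0) = 0. Let λ₁, λ₂ ∈ ℝ with λ₁ = 0 or λ₂ = 0. Then the system of equations s·a(t) = λ₁·s + λ₂·a(t) and s²/2 + F(t) = λ₁·t + λ₂·s has at most 4 distinct solutions (s,t) ∈ ℝ². -/
import Mathlib

lemma card4_aux {α : Type*} [DecidableEq α] (a b c d : α) :
    ({a, b, c, d} : Finset α).card ≤ 4 := by
  refine le_trans (Finset.card_insert_le _ _) (Nat.succ_le_succ ?_)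
  refine le_trans (Finset.card_insert_le _ _) (Nat.succ_le_succ ?_)
  refine le_trans (Finset.card_insert_le _ _) (Nat.succ_le_succ ?_)
  simp

lemma no_three_aux (g d : ℝ → ℝ) (hg : ∀ x, HasDerivAt g (d x) x) (hd : StrictMono d)
    {p q r : ℝ} (hpq : p < q) (hqr : q < r)
    (hp : g p = 0) (hq : g q = 0) (hr : g r = 0) : False := by
  have hcont : ∀ u v : ℝ, ContinuousOn g (Set.Icc u v) :=
    fun u v x _ => (hg x).continuousAt.continuousWithinAt
  obtain ⟨c₁, hc₁, hd₁⟩ := exists_hasDerivAt_eq_slope g d hpq (hcont p q) (fun x _ => hg x)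
  obtain ⟨c₂, hc₂, hd₂⟩ := exists_hasDerivAt_eq_slope g d hqr (hcont q r) (fun x _ => hg x)
  have h12 : d c₁ < d c₂ := hd (hc₁.2.trans hc₂.1)
  rw [hd₁, hd₂, hp, hq, hr] at h12
  simp at h12

lemma two_roots_aux (g d : ℝ → ℝ) (hg : ∀ x, HasDerivAt g (d x) x) (hd : StrictMono d) :
    ∃ x₁ x₂ : ℝ, ∀ x, g x = 0 → x = x₁ ∨ x = x₂ := by
  by_cases h1 : ∃ x, g x = 0
  · obtain ⟨x₁, hx₁⟩ := h1
    by_cases h2 : ∃ x, g x = 0 ∧ x ≠ x₁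
    · obtain ⟨x₂, hx₂, hne⟩ := h2
      refine ⟨x₁, x₂, fun z hz => ?_⟩
      by_contra hc
      push_neg at hc
      obtain ⟨hz1, hz2⟩ := hc
      have tri : ∀ u v w : ℝ, u < v → v < w → g u = 0 → g v = 0 → g w = 0 → False :=
        fun u v w h h' => no_three_aux g d hg hd h h'
      rcases lt_trichotomy x₁ x₂ with h | h | h
      · rcases lt_trichotomy z x₁ with h' | h' | h'
        · exact tri z x₁ x₂ h' h hz hx₁ hx₂
        · exact hz1 h'
        · rcases lt_trichotomy z x₂ with h'' | h'' | h''
          · exact tri x₁ z x₂ h' h'' hx₁ hz hx₂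
          · exact hz2 h''
          · exact tri x₁ x₂ z h h'' hx₁ hx₂ hz
      · exact hne h.symm
      · rcases lt_trichotomy z x₂ with h' | h' | h'
        · exact tri z x₂ x₁ h' h hz hx₂ hx₁
        · exact hz2 h'
        · rcases lt_trichotomy z x₁ with h'' | h'' | h''
          · exact tri x₂ z x₁ h' h'' hx₂ hz hx₁
          · exact hz1 h''
          · exact tri x₂ x₁ z h h'' hx₂ hx₁ hz
    · push_neg at h2
      exact ⟨x₁, x₁, fun z hz => Or.inl (h2 z hz)⟩
  · push_neg at h1
    exact ⟨0, 0, fun z hz => absurd hz (h1 z)⟩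

/-- **Lemma 8 ([LP20on, Lemma 19]).** If `a ∈ C²` with `a' > 0`, `a'' > 0`, `F ∈ C³`
with `F' = a`, `a(0) = F(0) = 0`, and `λ₁ = 0` or `λ₂ = 0`, then the system
`s·a(t) = λ₁ s + λ₂ a(t)`, `s²/2 + F(t) = λ₁ t + λ₂ s` has at most `4` distinct
solutions. -/
theorem stmt_5 (a F : ℝ → ℝ)
    (ha : ContDiff ℝ 2 a)
    (ha' : ∀ x : ℝ, 0 < deriv a x)
    (ha'' : ∀ x : ℝ, 0 < deriv (deriv a) x)
    (hFc : ContDiff ℝ 3 F)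
    (hF : ∀ x : ℝ, HasDerivAt F (a x) x)
    (ha0 : a 0 = 0) (hF0 : F 0 = 0)
    (l1 l2 : ℝ) (hl : l1 = 0 ∨ l2 = 0) :
    ∃ S : Finset (ℝ × ℝ), S.card ≤ 4 ∧
      ∀ p : ℝ × ℝ,
        (p.1 * a p.2 = l1 * p.1 + l2 * a p.2 ∧
          p.1 ^ 2 / 2 + F p.2 = l1 * p.2 + l2 * p.1) → p ∈ S := by
  have hamono : StrictMono a := strictMono_of_deriv_pos ha'
  have ainj : Function.Injective a := hamono.injective
  rcases hl with rfl | rfl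
  · -- l1 = 0
    obtain ⟨x₁, x₂, hroots⟩ := two_roots_aux (fun t => F t - l2 ^ 2 / 2) a
      (fun t => (hF t).sub_const _) hamono
    refine ⟨{((0 : ℝ), (0 : ℝ)), (2 * l2, 0), (l2, x₁), (l2, x₂)}, card4_aux _ _ _ _, ?_⟩
    rintro ⟨s, t⟩ ⟨e1, e2⟩
    simp only at e1 e2
    have h0 : (s - l2) * a t = 0 := by linear_combination e1
    rcases mul_eq_zero.1 h0 with hs | hat
    · have hs : s = l2 := by linarith [sub_eq_zero.mp hs]
      rw [hs] at e2
      have hft : F t - l2 ^ 2 / 2 = 0 := by linear_combination e2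
      rcases hroots t hft with rfl | rfl <;> simp [hs]
    · have ht : t = 0 := ainj (by rw [hat, ha0])
      subst ht
      rw [hF0] at e2
      have : s * (s - 2 * l2) = 0 := by linear_combination 2 * e2
      rcases mul_eq_zero.1 this with rfl | hs
      · simp
      · have : s = 2 * l2 := by linarith [sub_eq_zero.mp hs]
        subst this
        simp
  · -- l2 = 0
    obtain ⟨y₁, y₂, hroots⟩ := two_roots_aux (fun t => F t - l1 * t) (fun t => a t - l1)
      (fun t => (hF t).sub (by simpa using (hasDerivAt_id t).const_mul l1))
      (fun u v h => by simpa using sub_lt_sub_right (hamono h) l1)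
    by_cases ht0 : ∃ t, a t = l1
    · obtain ⟨t₀, ht₀⟩ := ht0
      set c := Real.sqrt (2 * (l1 * t₀ - F t₀)) with hc
      refine ⟨{((0 : ℝ), y₁), (0, y₂), (c, t₀), (-c, t₀)}, card4_aux _ _ _ _, ?_⟩
      rintro ⟨s, t⟩ ⟨e1, e2⟩
      simp only at e1 e2
      have h0 : s * (a t - l1) = 0 := by linear_combination e1
      rcases mul_eq_zero.1 h0 with rfl | hat
      · have hft : F t - l1 * t = 0 := by linear_combination e2
        rcases hroots t hft with rfl | rfl
        · simp
        · simp
      · have ht : t = t₀ := ainj (by rw [ht₀]; linarith [sub_eq_zero.mp hat])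
        rw [ht] at e2
        have hsq : s ^ 2 = 2 * (l1 * t₀ - F t₀) := by linear_combination 2 * e2
        have habs : c = |s| := by rw [hc, ← hsq, Real.sqrt_sq_eq_abs]
        rcases abs_cases s with ⟨h1, _⟩ | ⟨h1, _⟩
        · have hsc : s = c := by rw [habs, h1]
          simp [hsc, ht]
        · have hsc : s = -c := by rw [habs, h1]; ring
          simp [hsc, ht]
    · refine ⟨{((0 : ℝ), y₁), (0, y₂)}, le_trans (Finset.card_insert_le _ _) (by simp), ?_⟩
      rintro ⟨s, t⟩ ⟨e1, e2⟩
      simp only at e1 e2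
      have h0 : s * (a t - l1) = 0 := by linear_combination e1
      rcases mul_eq_zero.1 h0 with rfl | hat
      · have hft : F t - l1 * t = 0 := by linear_combination e2
        rcases hroots t hft with rfl | rfl
        · simp
        · simp
      · exact absurd ⟨t, by linarith [sub_eq_zero.mp hat]⟩ ht0
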